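/- Let K be a field of characteristic ≠ 2, 3 and let L be a Lie algebra over K with a basis e₋, h, e₊ satisfying ⁅e₋, h⁆ = −e₋, ⁅e₊, h⁆ = e₊, ⁅e₋, e₊⁆ = h (so L ≅ sl(2)). Let T : End_K(L) → L be the K-linear map T(φ) = ⁅h, φ(h)⁆ + ⁅e₋, φ(e₊)⁆ + ⁅e₊, φ(e₋)⁆. Then the kernel of T has dimension 6 over K; equivalently, the space of Hom-Lie structures on sl(2) is 6-dimensional. -/

import Mathlib

/-- For `L ≅ sl(2)` over a field of characteristic `≠ 2, 3`, the kernel of the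
linear map `T : End_K(L) → L`, `T φ = ⁅h, φ h⁆ + ⁅e₋, φ e₊⁆ + ⁅e₊, φ e₋⁆`, is
`6`-dimensional; equivalently, the space of Hom-Lie structures on `sl(2)` is `6`-dimensional. -/
theorem homLie_sl2_dim (K L : Type*) [Field K] [LieRing L] [LieAlgebra K L]
    (h2 : (2 : K) ≠ 0) (h3 : (3 : K) ≠ 0)
    (B : Module.Basis (Fin 3) K L) (em h ep : L)
    (hB0 : B 0 = em) (hB1 : B 1 = h) (hB2 : B 2 = ep)
    (br1 : ⁅em, h⁆ = -em) (br2 : ⁅ep, h⁆ = ep) (br3 : ⁅em, ep⁆ = h)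
    (T : (L →ₗ[K] L) →ₗ[K] L)
    (hT : ∀ φ : L →ₗ[K] L, T φ = ⁅h, φ h⁆ + ⁅em, φ ep⁆ + ⁅ep, φ em⁆) :
    Module.finrank K (LinearMap.ker T) = 6 := by
  have hfin : Module.Finite K L := Module.Finite.of_basis B
  have hhm : ⁅h, em⁆ = em := by rw [← lie_skew, br1, neg_neg]
  have hrange : LinearMap.range T = ⊤ := by
    rw [eq_top_iff, ← B.span_eq, Submodule.span_le]
    rintro _ ⟨i, rfl⟩
    fin_cases i
    · -- B 0 = em
      refine ⟨B.constr K ![0, em, 0], ?_⟩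
      have ch : (B.constr K ![0, em, 0]) h = em := by
        rw [← hB1, B.constr_basis]; simp
      have cm : (B.constr K ![0, em, 0]) em = 0 := by
        rw [← hB0, B.constr_basis]; simp
      have cp : (B.constr K ![0, em, 0]) ep = 0 := by
        rw [← hB2, B.constr_basis]; simp
      rw [hT, ch, cm, cp, hhm, lie_zero, lie_zero, add_zero, add_zero]
      exact hB0.symm
    · -- B 1 = h
      refine ⟨B.constr K ![0, 0, ep], ?_⟩
      have ch : (B.constr K ![0, 0, ep]) h = 0 := by
        rw [← hB1, B.constr_basis]; simp
      have cm : (B.constr K ![0, 0, ep]) em = 0 := by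
        rw [← hB0, B.constr_basis]; simp
      have cp : (B.constr K ![0, 0, ep]) ep = ep := by
        rw [← hB2, B.constr_basis]; simp
      rw [hT, ch, cm, cp, lie_zero, lie_zero, br3, zero_add, add_zero]
      exact hB1.symm
    · -- B 2 = ep
      refine ⟨B.constr K ![0, -ep, 0], ?_⟩
      have ch : (B.constr K ![0, -ep, 0]) h = -ep := by
        rw [← hB1, B.constr_basis]; simp
      have cm : (B.constr K ![0, -ep, 0]) em = 0 := by
        rw [← hB0, B.constr_basis]; simp
      have cp : (B.constr K ![0, -ep, 0]) ep = 0 := by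
        rw [← hB2, B.constr_basis]; simp
      have hhp : ⁅h, ep⁆ = -ep := by rw [← lie_skew, br2]
      rw [hT, ch, cm, cp, lie_zero, lie_zero, add_zero, add_zero, lie_neg, hhp,
        neg_neg]
      exact hB2.symm
  have hrn := LinearMap.finrank_range_add_finrank_ker T
  have hL : Module.finrank K L = 3 := by
    rw [Module.finrank_eq_card_basis B, Fintype.card_fin]
  have hEnd : Module.finrank K (L →ₗ[K] L) = 9 := by
    rw [Module.finrank_linearMap, hL]
  rw [hrange, finrank_top, hL, hEnd] at hrn
  omega
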